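/- Let φ(t) = 1/ϕ(Φ⁻¹(t)) for t ∈ (0,1), where ϕ is the standard normal density and Φ the standard normal CDF. Then ψ(t) := ∫₀¹ (min(t,s) − ts)φ(s)ds = ϕ(Φ⁻¹(t)), and q := ∫₀¹ ψ(t)φ(t)dt = 1. -/

import Mathlib

open Real MeasureTheory Set Filter

noncomputable def phi0 (x : ℝ) : ℝ := (1 / Real.sqrt (2 * π)) * Real.exp (-x ^ 2 / 2)

lemma phi0_pos (x : ℝ) : 0 < phi0 x := by
  unfold phi0
  positivity

lemma continuous_phi0 : Continuous phi0 := by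
  unfold phi0
  continuity

lemma phi0_eq (x : ℝ) : phi0 x = (1 / Real.sqrt (2 * π)) * Real.exp (-(1/2) * x ^ 2) := by
  unfold phi0; ring_nf

lemma integrable_phi0 : Integrable phi0 := by
  have h := (integrable_exp_neg_mul_sq (by norm_num : (0:ℝ) < 1/2)).const_mul (1 / Real.sqrt (2 * π))
  refine h.congr ?_
  filter_upwards with x
  rw [phi0_eq]

lemma integrable_mul_phi0 : Integrable (fun x => x * phi0 x) := by
  have h := (integrable_mul_exp_neg_mul_sq (by norm_num : (0:ℝ) < 1/2)).const_mul (1 / Real.sqrt (2 * π))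
  refine h.congr ?_
  filter_upwards with x
  rw [phi0_eq]; ring

lemma integral_phi0 : ∫ x, phi0 x = 1 := by
  have : ∫ x, phi0 x = (1 / Real.sqrt (2 * π)) * ∫ x, Real.exp (-(1/2) * x ^ 2) := by
    rw [← integral_const_mul]
    exact integral_congr_ae (Filter.Eventually.of_forall fun x => phi0_eq x)
  rw [this, integral_gaussian]
  rw [show π / (1/2 : ℝ) = 2 * π by ring]
  rw [one_div, inv_mul_cancel₀ (by positivity)]

lemma hasDerivAt_neg_phi0 (x : ℝ) : HasDerivAt (fun u => -phi0 u) (x * phi0 x) x := by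
  have h1 : HasDerivAt (fun u : ℝ => -u ^ 2 / 2) (-x) x := by
    have := ((hasDerivAt_pow 2 x).neg).div_const 2
    simpa using this.congr_deriv (by ring)
  have h2 := (h1.exp).const_mul (1 / Real.sqrt (2 * π))
  have := h2.neg
  refine (this.congr_deriv ?_)
  unfold phi0; ring

lemma tendsto_sq_atBot : Tendsto (fun x : ℝ => -x ^ 2 / 2) atTop atBot := by
  have h1 : Tendsto (fun x : ℝ => x ^ 2) atTop atTop := by
    exact tendsto_pow_atTop (n := 2) (two_ne_zero)
  have h2 : Tendsto (fun x : ℝ => -x ^ 2) atTop atBot := tendsto_neg_atBot_iff.mpr h1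
  exact h2.atBot_div_const (by norm_num)

lemma tendsto_sq_atBot' : Tendsto (fun x : ℝ => -x ^ 2 / 2) atBot atBot := by
  have h0 : Tendsto (fun x : ℝ => x ^ 2) atBot atTop := by
    have := (tendsto_pow_atTop (n := 2) two_ne_zero).comp (tendsto_neg_atBot_atTop : Tendsto (fun x:ℝ => -x) atBot atTop)
    exact this.congr (fun x => by simp [Function.comp])
  have h2 : Tendsto (fun x : ℝ => -x ^ 2) atBot atBot := tendsto_neg_atBot_iff.mpr h0
  exact h2.atBot_div_const (by norm_num)

lemma tendsto_phi0_atTop : Tendsto phi0 atTop (nhds 0) := by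
  have h2 := (Real.tendsto_exp_atBot.comp tendsto_sq_atBot).const_mul (1 / Real.sqrt (2 * π))
  rw [show (0:ℝ) = 1 / Real.sqrt (2 * π) * 0 by ring]
  exact h2.congr (fun x => by simp [phi0, Function.comp])

lemma tendsto_phi0_atBot : Tendsto phi0 atBot (nhds 0) := by
  have h2 := (Real.tendsto_exp_atBot.comp tendsto_sq_atBot').const_mul (1 / Real.sqrt (2 * π))
  rw [show (0:ℝ) = 1 / Real.sqrt (2 * π) * 0 by ring]
  exact h2.congr (fun x => by simp [phi0, Function.comp])

noncomputable def Phi0 (x : ℝ) : ℝ := ∫ t in Set.Iic x, phi0 t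

lemma Phi0_sub (a b : ℝ) : Phi0 b - Phi0 a = ∫ t in a..b, phi0 t :=
  intervalIntegral.integral_Iic_sub_Iic integrable_phi0.integrableOn integrable_phi0.integrableOn

lemma hasDerivAt_Phi0 (x : ℝ) : HasDerivAt Phi0 (phi0 x) x := by
  have key : Phi0 = fun y => Phi0 0 + ∫ t in (0:ℝ)..y, phi0 t := by
    funext y
    rw [← Phi0_sub 0 y]; ring
  rw [key]
  exact (intervalIntegral.integral_hasDerivAt_right
    (integrable_phi0.intervalIntegrable)
    (continuous_phi0.stronglyMeasurableAtFilter _ _)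
    continuous_phi0.continuousAt).const_add (Phi0 0)

lemma continuous_Phi0 : Continuous Phi0 :=
  continuous_iff_continuousAt.mpr fun x => (hasDerivAt_Phi0 x).continuousAt

lemma strictMono_Phi0 : StrictMono Phi0 :=
  strictMono_of_deriv_pos fun x => by
    rw [(hasDerivAt_Phi0 x).deriv]; exact phi0_pos x

lemma Phi0_nonneg (x : ℝ) : 0 ≤ Phi0 x :=
  setIntegral_nonneg measurableSet_Iic fun t _ => (phi0_pos t).le

lemma Phi0_pos (x : ℝ) : 0 < Phi0 x :=
  lt_of_le_of_lt (Phi0_nonneg (x - 1)) (strictMono_Phi0 (by linarith))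

lemma one_sub_Phi0 (x : ℝ) : 1 - Phi0 x = ∫ t in Set.Ioi x, phi0 t := by
  have h := intervalIntegral.integral_Iic_add_Ioi (b := x)
    integrable_phi0.integrableOn integrable_phi0.integrableOn
  rw [integral_phi0] at h
  unfold Phi0; linarith

lemma Phi0_lt_one (x : ℝ) : Phi0 x < 1 := by
  have h : (0:ℝ) < ∫ t in Set.Ioc x (x+1), phi0 t := by
    rw [← intervalIntegral.integral_of_le (by linarith), ← Phi0_sub]
    have := strictMono_Phi0 (show x < x + 1 by linarith)
    linarith
  have h2 : (∫ t in Set.Ioc x (x+1), phi0 t) ≤ ∫ t in Set.Ioi x, phi0 t := by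
    apply setIntegral_mono_set integrable_phi0.integrableOn
      (Filter.Eventually.of_forall fun t => (phi0_pos t).le)
    exact HasSubset.Subset.eventuallyLE Set.Ioc_subset_Ioi_self
  have := one_sub_Phi0 x
  linarith

lemma integral_Ioi_id_mul_phi0 (x : ℝ) : ∫ u in Set.Ioi x, u * phi0 u = phi0 x := by
  have h := integral_Ioi_of_hasDerivAt_of_tendsto' (a := x) (fun u _ => hasDerivAt_neg_phi0 u)
    integrable_mul_phi0.integrableOn (by simpa using tendsto_phi0_atTop.neg)
  simpa using h

lemma integral_Iic_id_mul_phi0 (x : ℝ) : ∫ u in Set.Iic x, u * phi0 u = -phi0 x := by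
  have h := integral_Iic_of_hasDerivAt_of_tendsto' (a := x) (fun u _ => hasDerivAt_neg_phi0 u)
    integrable_mul_phi0.integrableOn (by simpa using tendsto_phi0_atBot.neg)
  simpa using h

lemma mills_top {x : ℝ} (hx : 0 < x) : 1 - Phi0 x ≤ phi0 x / x := by
  rw [one_sub_Phi0]
  have h : (∫ u in Set.Ioi x, phi0 u) ≤ ∫ u in Set.Ioi x, (u * phi0 u) / x := by
    apply setIntegral_mono_on integrable_phi0.integrableOn
      ((integrable_mul_phi0.div_const x).integrableOn) measurableSet_Ioi
    intro u hu
    have hux : x ≤ u := le_of_lt hu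
    have h1 : (1:ℝ) ≤ u / x := (one_le_div hx).mpr hux
    calc phi0 u = 1 * phi0 u := by ring
    _ ≤ (u / x) * phi0 u := by
        apply mul_le_mul_of_nonneg_right h1 (phi0_pos u).le
    _ = u * phi0 u / x := by ring
  calc (∫ u in Set.Ioi x, phi0 u) ≤ ∫ u in Set.Ioi x, (u * phi0 u) / x := h
  _ = (∫ u in Set.Ioi x, u * phi0 u) / x := integral_div x _
  _ = phi0 x / x := by rw [integral_Ioi_id_mul_phi0]

lemma mills_bot {x : ℝ} (hx : x < 0) : Phi0 x ≤ phi0 x / (-x) := by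
  have h : Phi0 x ≤ ∫ u in Set.Iic x, (u * phi0 u) / x := by
    apply setIntegral_mono_on integrable_phi0.integrableOn
      ((integrable_mul_phi0.div_const x).integrableOn) measurableSet_Iic
    intro u hu
    have hux : u ≤ x := hu
    have h1 : (1:ℝ) ≤ u / x := (one_le_div_of_neg hx).mpr hux
    calc phi0 u = 1 * phi0 u := by ring
    _ ≤ (u / x) * phi0 u := mul_le_mul_of_nonneg_right h1 (phi0_pos u).le
    _ = u * phi0 u / x := by ring
  calc Phi0 x ≤ ∫ u in Set.Iic x, (u * phi0 u) / x := h
  _ = (∫ u in Set.Iic x, u * phi0 u) / x := integral_div x _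
  _ = -phi0 x / x := by rw [integral_Iic_id_mul_phi0]
  _ = phi0 x / (-x) := by rw [div_neg, neg_div]

lemma tendsto_Phi0_atTop : Tendsto Phi0 atTop (nhds 1) := by
  apply tendsto_of_tendsto_of_tendsto_of_le_of_le' (g := fun x => 1 - phi0 x)
    (h := fun _ => (1:ℝ))
  · simpa using (tendsto_const_nhds (x := (1:ℝ)) (f := atTop)).sub tendsto_phi0_atTop
  · exact tendsto_const_nhds
  · filter_upwards [eventually_ge_atTop (1:ℝ)] with x hx
    have h1 := mills_top (lt_of_lt_of_le one_pos hx)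
    have h2 : phi0 x / x ≤ phi0 x := by
      rw [div_le_iff₀ (by linarith)]
      nlinarith [phi0_pos x]
    linarith
  · filter_upwards with x; exact (Phi0_lt_one x).le

lemma tendsto_Phi0_atBot : Tendsto Phi0 atBot (nhds 0) := by
  apply tendsto_of_tendsto_of_tendsto_of_le_of_le' (g := fun _ => (0:ℝ)) (h := phi0)
  · exact tendsto_const_nhds
  · exact tendsto_phi0_atBot
  · filter_upwards with x; exact (Phi0_pos x).le
  · filter_upwards [eventually_le_atBot (-1:ℝ)] with x hx
    have h1 := mills_bot (by linarith : x < 0)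
    have h2 : phi0 x / (-x) ≤ phi0 x := by
      rw [div_le_iff₀ (by linarith)]
      nlinarith [phi0_pos x]
    linarith

lemma tendsto_F_atBot : Tendsto (fun x => x * Phi0 x + phi0 x) atBot (nhds 0) := by
  have h : Tendsto (fun x => x * Phi0 x) atBot (nhds 0) := by
    apply tendsto_of_tendsto_of_tendsto_of_le_of_le' (g := fun x => -phi0 x) (h := fun _ => (0:ℝ))
    · simpa using tendsto_phi0_atBot.neg
    · exact tendsto_const_nhds
    · filter_upwards [eventually_le_atBot (-1:ℝ)] with x hx
      have h1 := mills_bot (by linarith : x < 0)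
      have := mul_le_mul_of_nonpos_left h1 (by linarith : x ≤ 0)
      have heq : -phi0 x = x * (phi0 x / (-x)) := by
        rw [mul_div_assoc', eq_div_iff (by linarith : -x ≠ 0)]; ring
      linarith
    · filter_upwards [eventually_le_atBot (0:ℝ)] with x hx
      exact mul_nonpos_of_nonpos_of_nonneg hx (Phi0_nonneg x)
  simpa using h.add tendsto_phi0_atBot

lemma tendsto_G_atTop : Tendsto (fun x => x * (1 - Phi0 x) - phi0 x) atTop (nhds 0) := by
  have h : Tendsto (fun x => x * (1 - Phi0 x)) atTop (nhds 0) := by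
    apply tendsto_of_tendsto_of_tendsto_of_le_of_le' (g := fun _ => (0:ℝ)) (h := phi0)
    · exact tendsto_const_nhds
    · exact tendsto_phi0_atTop
    · filter_upwards [eventually_ge_atTop (0:ℝ)] with x hx
      exact mul_nonneg hx (by linarith [Phi0_lt_one x])
    · filter_upwards [eventually_ge_atTop (1:ℝ)] with x hx
      have h1 := mills_top (by linarith : (0:ℝ) < x)
      have := mul_le_mul_of_nonneg_left h1 (by linarith : (0:ℝ) ≤ x)
      calc x * (1 - Phi0 x) ≤ x * (phi0 x / x) := this
      _ = phi0 x := by field_simp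
  simpa using h.sub tendsto_phi0_atTop

lemma hasDerivAt_phi0 (x : ℝ) : HasDerivAt phi0 (-(x * phi0 x)) x := by
  exact (hasDerivAt_neg_phi0 x).neg.congr_of_eventuallyEq (Filter.Eventually.of_forall fun u => by simp)

lemma hasDerivAt_F (x : ℝ) : HasDerivAt (fun x => x * Phi0 x + phi0 x) (Phi0 x) x := by
  have h := ((hasDerivAt_id x).mul (hasDerivAt_Phi0 x)).add (hasDerivAt_phi0 x)
  refine h.congr_deriv ?_
  simp [id]

lemma hasDerivAt_G (x : ℝ) :
    HasDerivAt (fun x => x * (1 - Phi0 x) - phi0 x) (1 - Phi0 x) x := by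
  have h := ((hasDerivAt_id x).mul ((hasDerivAt_const x (1:ℝ)).sub (hasDerivAt_Phi0 x))).sub
    (hasDerivAt_phi0 x)
  refine h.congr_deriv ?_
  simp [id]

lemma integrableOn_Phi0_Iic (y : ℝ) : IntegrableOn Phi0 (Set.Iic y) := by
  set a := min y (-1) with ha
  have hay : a ≤ y := min_le_left _ _
  have ha1 : a ≤ -1 := min_le_right _ _
  have h1 : IntegrableOn Phi0 (Set.Iic a) := by
    apply Integrable.mono (integrable_phi0.integrableOn)
      (continuous_Phi0.aestronglyMeasurable.restrict)
    rw [ae_restrict_iff' measurableSet_Iic]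
    filter_upwards with x hx
    have hx1 : x ≤ -1 := le_trans hx ha1
    have hb := mills_bot (by linarith : x < 0)
    have h2 : phi0 x / (-x) ≤ phi0 x := by
      rw [div_le_iff₀ (by linarith)]
      nlinarith [phi0_pos x]
    rw [Real.norm_eq_abs, Real.norm_eq_abs, abs_of_nonneg (Phi0_nonneg x),
      abs_of_nonneg (phi0_pos x).le]
    linarith
  have h2 : IntegrableOn Phi0 (Set.Icc a y) :=
    continuous_Phi0.continuousOn.integrableOn_Icc
  have h3 : Set.Iic y ⊆ Set.Iic a ∪ Set.Icc a y := by
    intro x hx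
    rcases le_or_gt x a with h | h
    · exact Or.inl h
    · exact Or.inr ⟨h.le, hx⟩
  exact (h1.union h2).mono_set h3

lemma integral_Phi0_Iic (y : ℝ) : ∫ x in Set.Iic y, Phi0 x = y * Phi0 y + phi0 y := by
  have h := integral_Iic_of_hasDerivAt_of_tendsto' (a := y) (fun x _ => hasDerivAt_F x)
    (integrableOn_Phi0_Iic y) tendsto_F_atBot
  simpa using h

lemma integral_one_sub_Phi0_Ioi (y : ℝ) :
    ∫ x in Set.Ioi y, (1 - Phi0 x) = phi0 y - y * (1 - Phi0 y) := by
  have h := integral_Ioi_of_hasDerivAt_of_nonneg' (a := y) (fun x _ => hasDerivAt_G x)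
    (fun x _ => by linarith [Phi0_lt_one x]) tendsto_G_atTop
  rw [h]; ring

lemma integrableOn_one_sub_Phi0_Ioi (y : ℝ) : IntegrableOn (fun x => 1 - Phi0 x) (Set.Ioi y) :=
  integrableOn_Ioi_deriv_of_nonneg' (fun x _ => hasDerivAt_G x)
    (fun x _ => by linarith [Phi0_lt_one x]) tendsto_G_atTop

lemma range_Phi0 : Set.range Phi0 = Set.Ioo 0 1 := by
  apply Set.Subset.antisymm
  · rintro _ ⟨x, rfl⟩
    exact ⟨Phi0_pos x, Phi0_lt_one x⟩
  · rintro t ⟨ht0, ht1⟩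
    have h1 : ∀ᶠ x in atBot, Phi0 x < t := tendsto_Phi0_atBot.eventually_lt_const ht0
    have h2 : ∀ᶠ x in atTop, t < Phi0 x := tendsto_Phi0_atTop.eventually_const_lt ht1
    obtain ⟨a, ha⟩ := h1.exists
    obtain ⟨b, hb⟩ := h2.exists
    have hab : a ≤ b := by
      by_contra h
      push_neg at h
      have := strictMono_Phi0 h
      linarith
    have := intermediate_value_Icc hab continuous_Phi0.continuousOn
    have ht : t ∈ Set.Icc (Phi0 a) (Phi0 b) := ⟨ha.le, hb.le⟩
    obtain ⟨x, _, hx⟩ := this ht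
    exact ⟨x, hx⟩

/-- Example 5: with `ϕ` the standard normal density, `Φ` the standard normal CDF
and `Φ⁻¹` its inverse on `(0,1)`, the function `φ(t) = 1/ϕ(Φ⁻¹(t))` satisfies
`ψ(t) = ∫₀¹ (min(t,s) − ts) φ(s) ds = ϕ(Φ⁻¹(t))` and `q = ∫₀¹ ψ φ = 1`. -/
theorem normal_quantile_example
    (gphi gPhi Phinv : ℝ → ℝ)
    (hphi : ∀ x, gphi x = (1 / Real.sqrt (2 * π)) * Real.exp (-x ^ 2 / 2))
    (hPhi : ∀ x, gPhi x = ∫ t in Set.Iic x, gphi t)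
    (hinv : ∀ t ∈ Set.Ioo (0:ℝ) 1, gPhi (Phinv t) = t) :
    (∀ t ∈ Set.Ioo (0:ℝ) 1,
      (∫ s in (0:ℝ)..1, (min t s - t * s) * (1 / gphi (Phinv s)))
        = gphi (Phinv t)) ∧
    (∫ t in (0:ℝ)..1, gphi (Phinv t) * (1 / gphi (Phinv t))) = 1 := by
  have hgphi : gphi = phi0 := funext fun x => hphi x
  have hgPhi : ∀ x, gPhi x = Phi0 x := fun x => by
    rw [hPhi x, hgphi]; rfl
  have hPhinv : ∀ t ∈ Set.Ioo (0:ℝ) 1, Phi0 (Phinv t) = t := fun t ht => by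
    rw [← hgPhi]; exact hinv t ht
  have inj : Function.Injective Phi0 := strictMono_Phi0.injective
  have hPP : ∀ x, Phinv (Phi0 x) = x := fun x =>
    inj (hPhinv (Phi0 x) ⟨Phi0_pos x, Phi0_lt_one x⟩)
  constructor
  · intro t ht
    set y := Phinv t with hy
    have hty : Phi0 y = t := hPhinv t ht
    set g : ℝ → ℝ := fun s => (min t s - t * s) * (1 / gphi (Phinv s)) with hg
    have step1 : (∫ s in (0:ℝ)..1, g s) = ∫ s in Set.Ioo (0:ℝ) 1, g s := by
      rw [intervalIntegral.integral_of_le zero_le_one, integral_Ioc_eq_integral_Ioo]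
    have himage : Phi0 '' Set.univ = Set.Ioo (0:ℝ) 1 := by
      rw [Set.image_univ, range_Phi0]
    have step2 : (∫ s in Set.Ioo (0:ℝ) 1, g s)
        = ∫ x in Set.univ, |phi0 x| • g (Phi0 x) := by
      rw [← himage]
      exact MeasureTheory.integral_image_eq_integral_abs_deriv_smul MeasurableSet.univ
        (fun x _ => (hasDerivAt_Phi0 x).hasDerivWithinAt) inj.injOn g
    set F : ℝ → ℝ := fun x => min t (Phi0 x) - t * Phi0 x with hF
    have step3 : ∀ x, |phi0 x| • g (Phi0 x) = F x := by
      intro x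
      have hpos := phi0_pos x
      rw [hg]
      simp only [smul_eq_mul, hPP x, hgphi, abs_of_pos hpos]
      field_simp
      rfl
    have step4 : (∫ x in Set.univ, |phi0 x| • g (Phi0 x)) = ∫ x, F x := by
      rw [MeasureTheory.setIntegral_univ]
      exact integral_congr_ae (Filter.Eventually.of_forall step3)
    have eqIic : Set.EqOn F (fun x => (1 - t) * Phi0 x) (Set.Iic y) := by
      intro x hx
      have h1 : Phi0 x ≤ t := hty ▸ strictMono_Phi0.monotone hx
      simp only [hF, min_eq_right h1]
      ring
    have eqIoi : Set.EqOn F (fun x => t * (1 - Phi0 x)) (Set.Ioi y) := by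
      intro x hx
      have h1 : t ≤ Phi0 x := hty ▸ (strictMono_Phi0 hx).le
      simp only [hF, min_eq_left h1]
      ring
    have intIic : IntegrableOn F (Set.Iic y) :=
      MeasureTheory.IntegrableOn.congr_fun ((integrableOn_Phi0_Iic y).const_mul (1 - t))
        (fun x hx => (eqIic hx).symm) measurableSet_Iic
    have intIoi : IntegrableOn F (Set.Ioi y) :=
      MeasureTheory.IntegrableOn.congr_fun ((integrableOn_one_sub_Phi0_Ioi y).const_mul t)
        (fun x hx => (eqIoi hx).symm) measurableSet_Ioi
    have split : (∫ x, F x)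
        = (∫ x in Set.Iic y, F x) + ∫ x in Set.Ioi y, F x :=
      (intervalIntegral.integral_Iic_add_Ioi intIic intIoi).symm
    have vIic : (∫ x in Set.Iic y, F x) = (1 - t) * (y * t + phi0 y) := by
      rw [setIntegral_congr_fun measurableSet_Iic eqIic, integral_const_mul,
        integral_Phi0_Iic, hty]
    have vIoi : (∫ x in Set.Ioi y, F x) = t * (phi0 y - y * (1 - t)) := by
      rw [setIntegral_congr_fun measurableSet_Ioi eqIoi, integral_const_mul,
        integral_one_sub_Phi0_Ioi, hty]
    rw [step1, step2, step4, split, vIic, vIoi, hgphi, ← hty]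
    ring
  · have h1 : ∀ t, gphi (Phinv t) * (1 / gphi (Phinv t)) = 1 := fun t => by
      rw [hgphi, mul_one_div, div_self (ne_of_gt (phi0_pos _))]
    simp only [h1]
    simp
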